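/- For every θ in the interior of Θ, the function x ↦ q_θ(x) Γ(x) is Bochner ν-integrable, and A has a gradient at θ equal to the exponential-family mean: HasGradientAt A (∫ q_θ(x) Γ(x) ν(dx)) θ. -/

import Mathlib

open MeasureTheory Real
open scoped RealInnerProductSpace

open Finset in
/-- If `exp ⟪η, Γ ·⟫` is integrable for all `η` in a ball around `θ`, then there is a margin
`δ > 0` such that `exp (⟪θ, Γ ·⟫ + δ * ‖Γ ·‖)` is integrable. -/
lemma exp_margin_integrable {X : Type*} [MeasurableSpace X] {ν : Measure X}
    {H : Type*} [NormedAddCommGroup H] [InnerProductSpace ℝ H] [FiniteDimensional ℝ H]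
    [MeasurableSpace H] [BorelSpace H]
    {Γ : X → H} (hΓ : Measurable Γ) {θ : H} {ε : ℝ} (hε : 0 < ε)
    (hint : ∀ η ∈ Metric.ball θ ε, Integrable (fun x => exp ⟪η, Γ x⟫) ν) :
    ∃ δ > 0, Integrable (fun x => exp (⟪θ, Γ x⟫ + δ * ‖Γ x‖)) ν := by
  classical
  set n := Module.finrank ℝ H with hn
  let b : OrthonormalBasis (Fin n) ℝ H := stdOrthonormalBasis ℝ H
  set δ : ℝ := ε / (2 * (n + 1)) with hδdef
  have hδ : 0 < δ := by positivity
  refine ⟨δ, hδ, ?_⟩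
  set η : Finset (Fin n) → H :=
    fun t => θ + δ • ((∑ i ∈ t, b i) - ∑ i ∈ (univ : Finset (Fin n)) \ t, b i) with hη
  have hnormsum : ∀ s : Finset (Fin n), ‖∑ i ∈ s, b i‖ ≤ (n : ℝ) := by
    intro s
    refine (norm_sum_le _ _).trans ?_
    calc ∑ i ∈ s, ‖b i‖ = ∑ i ∈ s, 1 := by
          refine Finset.sum_congr rfl fun i _ => b.orthonormal.1 i
      _ = (s.card : ℝ) := by simp
      _ ≤ (n : ℝ) := by
          exact_mod_cast (s.card_le_univ.trans_eq (by simp))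
  have hηmem : ∀ t, η t ∈ Metric.ball θ ε := by
    intro t
    rw [Metric.mem_ball, dist_eq_norm]
    have : η t - θ = δ • ((∑ i ∈ t, b i) - ∑ i ∈ (univ : Finset (Fin n)) \ t, b i) := by
      simp [hη]
    rw [this, norm_smul, Real.norm_eq_abs, abs_of_pos hδ]
    have h1 : ‖(∑ i ∈ t, b i) - ∑ i ∈ (univ : Finset (Fin n)) \ t, b i‖ ≤ 2 * n := by
      refine (norm_sub_le _ _).trans ?_
      have := hnormsum t
      have := hnormsum ((univ : Finset (Fin n)) \ t)
      linarith
    calc δ * ‖(∑ i ∈ t, b i) - ∑ i ∈ (univ : Finset (Fin n)) \ t, b i‖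
        ≤ δ * (2 * n) := by
          exact mul_le_mul_of_nonneg_left h1 hδ.le
      _ < ε := by
          rw [hδdef]
          rw [div_mul_eq_mul_div, div_lt_iff₀ (by positivity)]
          have hnn : (0:ℝ) ≤ n := Nat.cast_nonneg n
          nlinarith
  have key : ∀ v : H, exp (⟪θ, v⟫ + δ * ‖v‖)
      ≤ ∑ t ∈ (univ : Finset (Fin n)).powerset, exp ⟪η t, v⟫ := by
    intro v
    have hnv : ‖v‖ ≤ ∑ i, |⟪b i, v⟫| := by
      conv_lhs => rw [← b.sum_repr' v]
      refine (norm_sum_le _ _).trans ?_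
      refine Finset.sum_le_sum fun i _ => ?_
      rw [norm_smul, Real.norm_eq_abs, b.orthonormal.1 i, mul_one]
    have e1 : exp (⟪θ, v⟫ + δ * ‖v‖)
        ≤ exp ⟪θ, v⟫ * ∏ i, (exp (δ * ⟪b i, v⟫) + exp (-(δ * ⟪b i, v⟫))) := by
      rw [Real.exp_add]
      refine mul_le_mul_of_nonneg_left ?_ (exp_pos _).le
      calc exp (δ * ‖v‖) ≤ exp (∑ i, δ * |⟪b i, v⟫|) := by
            apply Real.exp_le_exp.2
            rw [← Finset.mul_sum]
            exact mul_le_mul_of_nonneg_left hnv hδ.le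
        _ = ∏ i, exp (δ * |⟪b i, v⟫|) := by rw [Real.exp_sum]
        _ ≤ ∏ i, (exp (δ * ⟪b i, v⟫) + exp (-(δ * ⟪b i, v⟫))) := by
            refine Finset.prod_le_prod (fun i _ => (exp_pos _).le) fun i _ => ?_
            have h1 := (Real.exp_pos (δ * ⟪b i, v⟫)).le
            have h2 := (Real.exp_pos (-(δ * ⟪b i, v⟫))).le
            have habs : δ * |⟪b i, v⟫| = |δ * ⟪b i, v⟫| := by
              rw [abs_mul, abs_of_pos hδ]
            rw [habs]
            rcases abs_cases (δ * ⟪b i, v⟫) with ⟨h, _⟩ | ⟨h, _⟩ <;> rw [h] <;> linarith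
    have e2 : exp ⟪θ, v⟫ * ∏ i, (exp (δ * ⟪b i, v⟫) + exp (-(δ * ⟪b i, v⟫)))
        = ∑ t ∈ (univ : Finset (Fin n)).powerset, exp ⟪η t, v⟫ := by
      rw [Finset.prod_add, Finset.mul_sum]
      refine Finset.sum_congr rfl fun t _ => ?_
      rw [← Real.exp_sum, ← Real.exp_sum, ← Real.exp_add, ← Real.exp_add]
      congr 1
      have : ⟪η t, v⟫ = ⟪θ, v⟫ + δ * ((∑ i ∈ t, ⟪b i, v⟫)
          - ∑ i ∈ (univ : Finset (Fin n)) \ t, ⟪b i, v⟫) := by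
        simp [hη, inner_add_left, real_inner_smul_left, inner_sub_left, sum_inner]
      rw [this, mul_sub, Finset.mul_sum, Finset.mul_sum]
      rw [Finset.sum_neg_distrib]
      ring
    exact e1.trans_eq e2
  have hms : Measurable fun x => exp (⟪θ, Γ x⟫ + δ * ‖Γ x‖) := by
    exact Real.measurable_exp.comp ((measurable_const.inner hΓ).add (hΓ.norm.const_mul δ))
  have hsum : Integrable (fun x => ∑ t ∈ (univ : Finset (Fin n)).powerset, exp ⟪η t, Γ x⟫) ν :=
    integrable_finset_sum _ fun t _ => hint (η t) (hηmem t)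
  refine hsum.mono hms.aestronglyMeasurable (Filter.Eventually.of_forall fun x => ?_)
  rw [Real.norm_eq_abs, abs_of_pos (exp_pos _)]
  refine (key (Γ x)).trans (le_abs_self _)

/-- For `θ` in the interior of `Θ`, the function `x ↦ q_θ(x) Γ(x)` is Bochner integrable and
the log-partition function `A` has gradient equal to the exponential-family mean at `θ`. -/
theorem statement2
    {X : Type*} [MeasurableSpace X] (ν : Measure X) [SigmaFinite ν] (hν : ν ≠ 0)
    {H : Type*} [NormedAddCommGroup H] [InnerProductSpace ℝ H] [FiniteDimensional ℝ H]
    [MeasurableSpace H] [BorelSpace H]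
    (Γ : X → H) (hΓ : Measurable Γ)
    (Θ : Set H) (hΘ : Θ = {θ : H | Integrable (fun x => exp ⟪θ, Γ x⟫) ν})
    (A : H → ℝ) (hA : ∀ θ, A θ = log (∫ x, exp ⟪θ, Γ x⟫ ∂ν))
    (q : H → X → ℝ) (hq : ∀ θ x, q θ x = exp (⟪θ, Γ x⟫ - A θ)) :
    ∀ θ ∈ interior Θ,
      Integrable (fun x => q θ x • Γ x) ν ∧
      HasGradientAt A (∫ x, q θ x • Γ x ∂ν) θ := by
  haveI : NeZero ν := ⟨hν⟩
  intro θ hθ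
  obtain ⟨ε, hε, hball⟩ := Metric.isOpen_iff.mp isOpen_interior θ hθ
  have hint : ∀ η ∈ Metric.ball θ ε, Integrable (fun x => exp ⟪η, Γ x⟫) ν := by
    intro η hη
    have h2 : η ∈ Θ := interior_subset (hball hη)
    rw [hΘ] at h2
    exact h2
  obtain ⟨δ, hδ, hδint⟩ := exp_margin_integrable hΓ hε hint
  -- pointwise bound with margin
  have hb2 : ∀ v : H, ‖v‖ * exp (⟪θ, v⟫ + δ / 2 * ‖v‖) ≤ 2 / δ * exp (⟪θ, v⟫ + δ * ‖v‖) := by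
    intro v
    have h0 : δ / 2 * ‖v‖ ≤ exp (δ / 2 * ‖v‖) :=
      le_trans (by linarith [Real.add_one_le_exp (δ / 2 * ‖v‖)]) le_rfl
    have h1 : ‖v‖ ≤ 2 / δ * exp (δ / 2 * ‖v‖) := by
      have h2 : 2 / δ * (δ / 2 * ‖v‖) = ‖v‖ := by field_simp
      calc ‖v‖ = 2 / δ * (δ / 2 * ‖v‖) := h2.symm
        _ ≤ 2 / δ * exp (δ / 2 * ‖v‖) := mul_le_mul_of_nonneg_left h0 (by positivity)
    calc ‖v‖ * exp (⟪θ, v⟫ + δ / 2 * ‖v‖)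
        ≤ (2 / δ * exp (δ / 2 * ‖v‖)) * exp (⟪θ, v⟫ + δ / 2 * ‖v‖) :=
          mul_le_mul_of_nonneg_right h1 (exp_pos _).le
      _ = 2 / δ * exp (⟪θ, v⟫ + δ * ‖v‖) := by
          rw [mul_assoc, ← Real.exp_add]
          ring_nf
  have hbound_int : Integrable (fun x => ‖Γ x‖ * exp (⟪θ, Γ x⟫ + δ / 2 * ‖Γ x‖)) ν := by
    have hm : Measurable fun x => ‖Γ x‖ * exp (⟪θ, Γ x⟫ + δ / 2 * ‖Γ x‖) :=
      hΓ.norm.mul (Real.measurable_exp.comp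
        ((measurable_const.inner hΓ).add (hΓ.norm.const_mul (δ / 2))))
    refine (hδint.const_mul (2 / δ)).mono hm.aestronglyMeasurable
      (Filter.Eventually.of_forall fun x => ?_)
    have hf : (0:ℝ) ≤ ‖Γ x‖ * exp (⟪θ, Γ x⟫ + δ / 2 * ‖Γ x‖) := by positivity
    have hg : (0:ℝ) ≤ 2 / δ * exp (⟪θ, Γ x⟫ + δ * ‖Γ x‖) := by positivity
    rw [Real.norm_of_nonneg hf, Real.norm_of_nonneg hg]
    exact hb2 (Γ x)
  -- integrability of exp • Γ
  have hGint : Integrable (fun x => exp ⟪θ, Γ x⟫ • Γ x) ν := by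
    have hm : Measurable fun x => exp ⟪θ, Γ x⟫ • Γ x :=
      (Real.measurable_exp.comp (measurable_const.inner hΓ)).smul hΓ
    refine hbound_int.mono hm.aestronglyMeasurable
      (Filter.Eventually.of_forall fun x => ?_)
    have hf : ‖exp ⟪θ, Γ x⟫ • Γ x‖ = exp ⟪θ, Γ x⟫ * ‖Γ x‖ := by
      rw [norm_smul, Real.norm_eq_abs, abs_of_pos (exp_pos _)]
    have hg : (0:ℝ) ≤ ‖Γ x‖ * exp (⟪θ, Γ x⟫ + δ / 2 * ‖Γ x‖) := by positivity
    show ‖exp ⟪θ, Γ x⟫ • Γ x‖ ≤ ‖‖Γ x‖ * exp (⟪θ, Γ x⟫ + δ / 2 * ‖Γ x‖)‖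
    rw [hf, Real.norm_of_nonneg hg]
    have hle : exp ⟪θ, Γ x⟫ ≤ exp (⟪θ, Γ x⟫ + δ / 2 * ‖Γ x‖) :=
      Real.exp_le_exp.2 (le_add_of_nonneg_right (by positivity))
    nlinarith [norm_nonneg (Γ x), exp_pos ⟪θ, Γ x⟫]
  set Z : H → ℝ := fun ηv => ∫ x, exp ⟪ηv, Γ x⟫ ∂ν with hZ
  have hZθint : Integrable (fun x => exp ⟪θ, Γ x⟫) ν :=
    hint θ (Metric.mem_ball_self hε)
  have hZpos : 0 < Z θ := integral_exp_pos hZθint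
  set G : H := ∫ x, exp ⟪θ, Γ x⟫ • Γ x ∂ν with hG
  -- derivative of Z
  set F' : H → X → (H →L[ℝ] ℝ) := fun ηv x => exp ⟪ηv, Γ x⟫ • innerSL ℝ (Γ x) with hF'
  have hF'int : Integrable (F' θ) ν := by
    have hm : StronglyMeasurable (F' θ) := by
      exact ((Real.measurable_exp.comp (measurable_const.inner hΓ)).stronglyMeasurable).smul
        ((innerSL ℝ (E := H)).continuous.comp_stronglyMeasurable hΓ.stronglyMeasurable)
    refine hbound_int.mono hm.aestronglyMeasurable
      (Filter.Eventually.of_forall fun x => ?_)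
    have hf : ‖F' θ x‖ = exp ⟪θ, Γ x⟫ * ‖Γ x‖ := by
      simp only [hF']
      rw [norm_smul (exp ⟪θ, Γ x⟫) (innerSL ℝ (Γ x)), Real.norm_eq_abs,
        abs_of_pos (exp_pos _), innerSL_apply_norm]
    have hg : (0:ℝ) ≤ ‖Γ x‖ * exp (⟪θ, Γ x⟫ + δ / 2 * ‖Γ x‖) := by positivity
    show ‖F' θ x‖ ≤ ‖‖Γ x‖ * exp (⟪θ, Γ x⟫ + δ / 2 * ‖Γ x‖)‖
    rw [hf, Real.norm_of_nonneg hg]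
    have h1 : exp ⟪θ, Γ x⟫ ≤ exp (⟪θ, Γ x⟫ + δ / 2 * ‖Γ x‖) :=
      Real.exp_le_exp.2 (le_add_of_nonneg_right (by positivity))
    nlinarith [norm_nonneg (Γ x), exp_pos ⟪θ, Γ x⟫]
  have hZderiv : HasFDerivAt Z (innerSL ℝ G) θ := by
    have hmain : HasFDerivAt Z (∫ x, F' θ x ∂ν) θ := by
      refine hasFDerivAt_integral_of_dominated_of_fderiv_le
        (F := fun ηv x => exp ⟪ηv, Γ x⟫)
        (bound := fun x => ‖Γ x‖ * exp (⟪θ, Γ x⟫ + δ / 2 * ‖Γ x‖))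
        (Metric.ball_mem_nhds θ (half_pos hδ)) ?_ hZθint hF'int.aestronglyMeasurable ?_ hbound_int ?_
      · exact Filter.Eventually.of_forall fun ηv =>
          (Real.measurable_exp.comp (measurable_const.inner hΓ)).aestronglyMeasurable
      · refine Filter.Eventually.of_forall fun x => fun ηv hηv => ?_
        show ‖F' ηv x‖ ≤ ‖Γ x‖ * exp (⟪θ, Γ x⟫ + δ / 2 * ‖Γ x‖)
        simp only [hF']
        rw [norm_smul (exp ⟪ηv, Γ x⟫) (innerSL ℝ (Γ x)), Real.norm_eq_abs,
          abs_of_pos (exp_pos _), innerSL_apply_norm]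
        rw [mul_comm]
        refine mul_le_mul_of_nonneg_left ?_ (norm_nonneg (Γ x))
        apply Real.exp_le_exp.2
        have h1 : ⟪ηv, Γ x⟫ = ⟪θ, Γ x⟫ + ⟪ηv - θ, Γ x⟫ := by
          rw [inner_sub_left]; ring
        rw [h1]
        have h2 : ⟪ηv - θ, Γ x⟫ ≤ ‖ηv - θ‖ * ‖Γ x‖ := real_inner_le_norm _ _
        have h3 : ‖ηv - θ‖ ≤ δ / 2 := by
          rw [Metric.mem_ball, dist_eq_norm] at hηv
          exact hηv.le
        have h4 : ‖ηv - θ‖ * ‖Γ x‖ ≤ δ / 2 * ‖Γ x‖ :=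
          mul_le_mul_of_nonneg_right h3 (norm_nonneg _)
        linarith
      · refine Filter.Eventually.of_forall fun x => fun ηv _ => ?_
        have hlin : HasFDerivAt (fun ζ : H => ⟪ζ, Γ x⟫) (innerSL ℝ (Γ x)) ηv := by
          have h := (innerSL ℝ (Γ x)).hasFDerivAt (x := ηv)
          have heq : (fun ζ : H => ⟪ζ, Γ x⟫) = fun ζ => innerSL ℝ (Γ x) ζ := by
            funext ζ
            simp [real_inner_comm]
          rw [heq]
          exact h
        exact hlin.exp
    have heq : (∫ x, F' θ x ∂ν) = innerSL ℝ G := by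
      rw [hG, ← ContinuousLinearMap.integral_comp_comm (innerSL ℝ (E := H)) hGint]
      refine integral_congr_ae (Filter.Eventually.of_forall fun x => ?_)
      simp [hF']
    rw [← heq]; exact hmain
  -- A = log ∘ Z
  have hAeq : A = fun ηv => log (Z ηv) := funext fun ηv => hA ηv
  have hAderiv : HasFDerivAt A ((Z θ)⁻¹ • innerSL ℝ G) θ := by
    rw [hAeq]
    exact hZderiv.log hZpos.ne'
  -- relate q θ • Γ to exp • Γ
  have hqeq : (fun x => q θ x • Γ x) = fun x => exp (-A θ) • (exp ⟪θ, Γ x⟫ • Γ x) := by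
    funext x
    rw [hq, smul_smul, ← Real.exp_add]
    ring_nf
  have hexpA : exp (-A θ) = (Z θ)⁻¹ := by
    have : A θ = log (Z θ) := hA θ
    rw [this, Real.exp_neg, Real.exp_log hZpos]
  constructor
  · rw [hqeq]
    exact hGint.smul (exp (-A θ))
  · have hMval : (∫ x, q θ x • Γ x ∂ν) = (Z θ)⁻¹ • G := by
      rw [hqeq, integral_smul, hexpA, hG]
    rw [hMval, hasGradientAt_iff_hasFDerivAt]
    convert hAderiv using 1
    ext v
    simp [InnerProductSpace.toDual_apply_apply, real_inner_smul_left]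
    ext v
    simp [InnerProductSpace.toDual_apply_apply, real_inner_smul_left]
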